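/- Let X_1, ..., X_n be real random variables on a probability space such that X_i is σ_i-subexponential for each i, and such that the family X_1, ..., X_n is p-wise independent for a positive integer p. Let σ² = Σ_{i=1}^n σ_i² and X = Σ_{i=1}^n X_i. Then E[(X − E[X])^p] ≤ (3σ)^p · (2p)^p. -/

import Mathlib

open MeasureTheory ProbabilityTheory Finset

lemma aux_pow_le (m : ℕ) : (m:ℝ)^m ≤ (m.factorial : ℝ) * Real.exp m := by
  have h := Real.sum_le_exp_of_nonneg (x := (m:ℝ)) (by positivity) (m+1)
  have h2 : (m:ℝ)^m / m.factorial ≤ Real.exp m := by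
    refine le_trans ?_ h
    refine Finset.single_le_sum (f := fun i => (m:ℝ)^i / i.factorial) ?_ (Finset.self_mem_range_succ m)
    intro i _; positivity
  have hf : (0:ℝ) < m.factorial := by positivity
  calc (m:ℝ)^m = ((m:ℝ)^m / m.factorial) * m.factorial := by field_simp
  _ ≤ Real.exp m * m.factorial := by gcongr
  _ = _ := by ring


lemma aux_sum_multichoose (q : ℕ) : ∀ n : ℕ, ∑ b ∈ range (n+1), Nat.multichoose q b = Nat.multichoose (q+1) n := by
  intro n
  induction n with
  | zero => simp [Nat.multichoose_zero_right]
  | succ n ih =>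
      rw [Finset.sum_range_succ, ih, Nat.multichoose_succ_succ]
      omega

lemma aux_card_piAntidiag {ι : Type*} [DecidableEq ι] (s : Finset ι) (N : ℕ) :
    (Finset.piAntidiag s N).card ≤ Nat.multichoose s.card N := by
  classical
  induction s using Finset.cons_induction generalizing N with
  | empty =>
      rw [Finset.piAntidiag_empty]
      rcases Nat.eq_zero_or_pos N with h | h
      · subst h; simp [Nat.multichoose_zero_right]
      · obtain ⟨M, rfl⟩ := Nat.exists_eq_add_of_lt h
        simp [Nat.multichoose_zero_succ, if_neg (by omega : ¬ (M + 1 + 0) = 0)]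
  | cons a s ha ih =>
      rw [Finset.piAntidiag_cons ha N, Finset.card_disjiUnion]
      calc ∑ p ∈ Finset.HasAntidiagonal.antidiagonal N, ((Finset.piAntidiag s p.2).map _).card
          ≤ ∑ p ∈ Finset.HasAntidiagonal.antidiagonal N, Nat.multichoose s.card p.2 := by
            refine Finset.sum_le_sum fun p _ => ?_
            rw [Finset.card_map]; exact ih _
        _ = ∑ b ∈ range (N+1), Nat.multichoose s.card (N - b) :=
            Finset.Nat.sum_antidiagonal_eq_sum_range_succ (fun a b => Nat.multichoose s.card b) N
        _ = ∑ b ∈ range (N+1), Nat.multichoose s.card b := by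
            simpa using Finset.sum_range_reflect (fun b => Nat.multichoose s.card b) (N+1)
        _ = Nat.multichoose (s.card + 1) N := aux_sum_multichoose _ _
        _ = Nat.multichoose (Finset.cons a s ha).card N := by rw [Finset.card_cons]

lemma aux_esymm_le {ι : Type*} [DecidableEq ι] (u : Finset ι) (x : ι → ℝ)
    (hx : ∀ i, 0 ≤ x i) : ∀ q : ℕ,
    ∑ s ∈ u.powersetCard q, ∏ i ∈ s, x i ≤ (∑ i ∈ u, x i) ^ q := by
  classical
  induction u using Finset.cons_induction with
  | empty =>
      intro q
      rcases Nat.eq_zero_or_pos q with rfl | h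
      · simp
      · rw [Finset.powersetCard_eq_empty.2 (by simpa using h)]
        simp
  | cons a u ha ih =>
      intro q
      rcases Nat.eq_zero_or_pos q with rfl | h
      · simp
      obtain ⟨q, rfl⟩ := Nat.exists_eq_add_of_lt h
      rw [zero_add] at *
      have hsplit : (Finset.cons a u ha).powersetCard (q+1)
          = u.powersetCard (q+1) ∪ (u.powersetCard q).image (insert a) := by
        rw [Finset.cons_eq_insert, Finset.powersetCard_succ_insert ha]
      have hdisj : Disjoint (u.powersetCard (q+1)) ((u.powersetCard q).image (insert a)) := by
        rw [Finset.disjoint_left]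
        intro s hs hs'
        rw [Finset.mem_powersetCard] at hs
        obtain ⟨t, ht, rfl⟩ := Finset.mem_image.1 hs'
        exact ha (hs.1 (Finset.mem_insert_self a t))
      have hsum0 : (0:ℝ) ≤ ∑ i ∈ u, x i := Finset.sum_nonneg fun i _ => hx i
      have himg : ∑ s ∈ (u.powersetCard q).image (insert a), ∏ i ∈ s, x i
          = x a * ∑ t ∈ u.powersetCard q, ∏ i ∈ t, x i := by
        rw [Finset.sum_image, Finset.mul_sum]
        · refine Finset.sum_congr rfl fun t ht => ?_
          rw [Finset.mem_powersetCard] at ht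
          rw [Finset.prod_insert (fun h => ha (ht.1 h))]
        · intro t ht t' ht' hee
          simp only [Finset.mem_coe, Finset.mem_powersetCard] at ht ht'
          have h1 := Finset.erase_insert (fun h => ha (ht.1 h))
          have h2 := Finset.erase_insert (fun h => ha (ht'.1 h))
          rw [← h1, ← h2, hee]
      rw [hsplit, Finset.sum_union hdisj, himg]
      calc ∑ s ∈ u.powersetCard (q+1), ∏ i ∈ s, x i + x a * ∑ t ∈ u.powersetCard q, ∏ i ∈ t, x i
          ≤ (∑ i ∈ u, x i)^(q+1) + x a * (∑ i ∈ u, x i)^q := by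
            exact add_le_add (ih (q+1)) (mul_le_mul_of_nonneg_left (ih q) (hx a))
        _ ≤ (∑ i ∈ Finset.cons a u ha, x i)^(q+1) := by
            rw [Finset.sum_cons]
            have h1 : (∑ i ∈ u, x i)^(q+1) + x a * (∑ i ∈ u, x i)^q
                = ((∑ i ∈ u, x i) + x a) * (∑ i ∈ u, x i)^q := by ring
            rw [h1]
            have h2 : ((∑ i ∈ u, x i))^q ≤ (x a + ∑ i ∈ u, x i)^q := by
              exact pow_le_pow_left₀ hsum0 (by linarith [hx a]) q
            calc ((∑ i ∈ u, x i) + x a) * (∑ i ∈ u, x i)^q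
                ≤ (x a + ∑ i ∈ u, x i) * (x a + ∑ i ∈ u, x i)^q := by
                  refine mul_le_mul (by linarith) h2 (by positivity) (by linarith [hx a])
              _ = (x a + ∑ i ∈ u, x i)^(q+1) := by ring

lemma aux_indep_prod {Ω ι : Type*} [MeasurableSpace Ω] {μ : Measure Ω} [IsProbabilityMeasure μ]
    (g : ι → Ω → ℝ) (hgmeas : ∀ i, Measurable (g i)) (hgint : ∀ i, Integrable (g i) μ)
    (hindep : iIndepFun (m := fun _ => (inferInstance : MeasurableSpace ℝ)) g μ) (t : Finset ι) :
    Integrable (fun ω => ∏ i ∈ t, g i ω) μ ∧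
      (∫ ω, ∏ i ∈ t, g i ω ∂μ) = ∏ i ∈ t, ∫ ω, g i ω ∂μ := by
  classical
  induction t using Finset.cons_induction with
  | empty => simp
  | cons a t ha ih =>
      have hIF : IndepFun (∏ j ∈ t, g j) (g a) μ :=
        hindep.indepFun_finsetProd_of_notMem hgmeas ha
      have hprodfun : (fun ω => ∏ i ∈ t, g i ω) = ∏ j ∈ t, g j := by
        funext ω; simp [Finset.prod_apply]
      have hint1 : Integrable (∏ j ∈ t, g j) μ := by rw [← hprodfun]; exact ih.1
      have hmul : Integrable ((∏ j ∈ t, g j) * g a) μ := hIF.integrable_mul hint1 (hgint a)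
      have heq : (fun ω => ∏ i ∈ Finset.cons a t ha, g i ω) = (∏ j ∈ t, g j) * g a := by
        funext ω
        simp only [Finset.prod_cons, Pi.mul_apply, Finset.prod_apply]
        ring
      constructor
      · rw [heq]; exact hmul
      · rw [show (fun ω => ∏ i ∈ Finset.cons a t ha, g i ω) = fun ω => ((∏ j ∈ t, g j) * g a) ω from heq]
        have := hIF.integral_mul_eq_mul_integral hint1.aestronglyMeasurable (hgint a).aestronglyMeasurable
        calc (∫ ω, ((∏ j ∈ t, g j) * g a) ω ∂μ) = ∫ ω, (∏ j ∈ t, g j) ω * g a ω ∂μ := rfl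
          _ = (∫ ω, (∏ j ∈ t, g j) ω ∂μ) * ∫ ω, g a ω ∂μ := this
          _ = (∫ ω, ∏ j ∈ t, g j ω ∂μ) * ∫ ω, g a ω ∂μ := by rw [← hprodfun]
          _ = (∏ j ∈ t, ∫ ω, g j ω ∂μ) * ∫ ω, g a ω ∂μ := by rw [ih.2]
          _ = ∏ j ∈ Finset.cons a t ha, ∫ ω, g j ω ∂μ := by rw [Finset.prod_cons]; ring
lemma aux_combin {n p : ℕ} (hp : 1 ≤ p) (σ : Fin n → ℝ) (hσ : ∀ i, 0 ≤ σ i)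
    (σb : ℝ) (hσb0 : 0 ≤ σb) (hσle : ∀ i, σ i ≤ σb)
    (hσsum : (∑ i, σ i ^ 2) ≤ σb ^ 2) :
    ∑ k ∈ (Finset.piAntidiag (univ : Finset (Fin n)) p).filter (fun k => ∀ i, k i ≠ 1),
      ∏ i, σ i ^ k i ≤ 2 ^ p * σb ^ p := by
  classical
  set B := (Finset.piAntidiag (univ : Finset (Fin n)) p).filter (fun k => ∀ i, k i ≠ 1) with hB
  -- basic facts about members of B
  have hmemB : ∀ k ∈ B, (∑ i, k i = p) ∧ (∀ i, k i ≠ 1) := by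
    intro k hk
    rw [hB, Finset.mem_filter, Finset.mem_piAntidiag] at hk
    exact ⟨hk.1.1, hk.2⟩
  have hsupp : ∀ k ∈ B, ∑ i ∈ univ.filter (fun i => k i ≠ 0), k i = p := by
    intro k hk
    rw [Finset.sum_filter_ne_zero]
    exact (hmemB k hk).1
  have hcard_le : ∀ k ∈ B, 2 * (univ.filter (fun i => k i ≠ 0)).card ≤ p := by
    intro k hk
    have h2 : ∀ i ∈ univ.filter (fun i => k i ≠ 0), 2 ≤ k i := by
      intro i hi
      rw [Finset.mem_filter] at hi
      have := (hmemB k hk).2 i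
      omega
    calc 2 * (univ.filter (fun i => k i ≠ 0)).card
        = ∑ _i ∈ univ.filter (fun i => k i ≠ 0), 2 := by
          rw [Finset.sum_const, smul_eq_mul, mul_comm]
      _ ≤ ∑ i ∈ univ.filter (fun i => k i ≠ 0), k i := Finset.sum_le_sum h2
      _ = p := hsupp k hk
  -- fiberwise decomposition by support cardinality
  have hfiber : ∑ k ∈ B, ∏ i, σ i ^ k i
      = ∑ q ∈ range (p+1), ∑ k ∈ B.filter
          (fun k => (univ.filter (fun i => k i ≠ 0)).card = q), ∏ i, σ i ^ k i := by
    rw [Finset.sum_fiberwise_of_maps_to]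
    intro k hk
    rw [Finset.mem_range]
    have := hcard_le k hk
    omega
  rw [hfiber]
  -- per fiber bound
  have hq : ∀ q ∈ range (p+1),
      ∑ k ∈ B.filter (fun k => (univ.filter (fun i => k i ≠ 0)).card = q), ∏ i, σ i ^ k i
      ≤ ((p-1).choose (q-1) : ℝ) * σb ^ p := by
    intro q _
    set Bq := B.filter (fun k => (univ.filter (fun i => k i ≠ 0)).card = q) with hBq
    rcases Finset.eq_empty_or_nonempty Bq with he | ⟨k₀, hk₀⟩
    · rw [he, Finset.sum_empty]; positivity
    -- extract q ≥ 1 and 2q ≤ p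
    have hk₀B : k₀ ∈ B := (Finset.mem_filter.1 hk₀).1
    have hk₀q : (univ.filter (fun i => k₀ i ≠ 0)).card = q := (Finset.mem_filter.1 hk₀).2
    have h2q : 2 * q ≤ p := hk₀q ▸ hcard_le k₀ hk₀B
    have hq1 : 1 ≤ q := by
      rcases Nat.eq_zero_or_pos q with rfl | h
      · exfalso
        have hemp : univ.filter (fun i => k₀ i ≠ 0) = ∅ := Finset.card_eq_zero.1 hk₀q
        have hps := hsupp k₀ hk₀B
        rw [hemp, Finset.sum_empty] at hps
        omega
      · exact h
    -- the injection
    set T := (Finset.powersetCard q (univ : Finset (Fin n))).sigma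
        (fun s => Finset.piAntidiag s (p - 2*q)) with hT
    set φ : (Fin n → ℕ) → ((_ : Finset (Fin n)) × (Fin n → ℕ)) :=
      fun k => ⟨univ.filter (fun i => k i ≠ 0), fun i => k i - 2⟩ with hφ
    set v : ((_ : Finset (Fin n)) × (Fin n → ℕ)) → ℝ :=
      fun y => σb ^ (p - 2*q) * ∏ i ∈ y.1, σ i ^ 2 with hv
    have hperk : ∀ k ∈ Bq, ∏ i, σ i ^ k i ≤ v (φ k) := by
      intro k hk
      have hkB : k ∈ B := (Finset.mem_filter.1 hk).1
      have hkq : (univ.filter (fun i => k i ≠ 0)).card = q := (Finset.mem_filter.1 hk).2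
      set s := univ.filter (fun i => k i ≠ 0) with hs
      have h2 : ∀ i ∈ s, 2 ≤ k i := by
        intro i hi
        rw [hs, Finset.mem_filter] at hi
        have := (hmemB k hkB).2 i
        omega
      have hsum : ∑ i ∈ s, (k i - 2) = p - 2*q := by
        have h1 : ∑ i ∈ s, ((k i - 2) + 2) = ∑ i ∈ s, k i :=
          Finset.sum_congr rfl fun i hi => by have := h2 i hi; omega
        rw [Finset.sum_add_distrib, Finset.sum_const, smul_eq_mul] at h1
        have h3 : ∑ i ∈ s, k i = p := hsupp k hkB
        have h4 : s.card = q := hkq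
        omega
      calc ∏ i, σ i ^ k i = ∏ i ∈ s, σ i ^ k i := by
            refine (Finset.prod_subset (Finset.filter_subset _ _) ?_).symm
            intro i _ hi
            have hk0 : k i = 0 := by
              by_contra h
              exact hi (Finset.mem_filter.2 ⟨Finset.mem_univ i, h⟩)
            rw [hk0, pow_zero]
        _ = ∏ i ∈ s, (σ i ^ 2 * σ i ^ (k i - 2)) := by
            refine Finset.prod_congr rfl fun i hi => ?_
            rw [← pow_add]
            congr 1
            have := h2 i hi
            omega
        _ ≤ ∏ i ∈ s, (σ i ^ 2 * σb ^ (k i - 2)) := by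
            refine Finset.prod_le_prod
              (fun i _ => mul_nonneg (sq_nonneg _) (pow_nonneg (hσ i) _)) fun i _ => ?_
            have : σ i ^ (k i - 2) ≤ σb ^ (k i - 2) := pow_le_pow_left₀ (hσ i) (hσle i) _
            nlinarith [sq_nonneg (σ i), hσ i]
        _ = (∏ i ∈ s, σ i ^ 2) * ∏ i ∈ s, σb ^ (k i - 2) := Finset.prod_mul_distrib
        _ = (∏ i ∈ s, σ i ^ 2) * σb ^ (p - 2*q) := by
            rw [Finset.prod_pow_eq_pow_sum, hsum]
        _ = v (φ k) := by rw [hv, hφ, mul_comm]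
    have hmapsto : ∀ k ∈ Bq, φ k ∈ T := by
      intro k hk
      have hkB : k ∈ B := (Finset.mem_filter.1 hk).1
      have hkq : (univ.filter (fun i => k i ≠ 0)).card = q := (Finset.mem_filter.1 hk).2
      simp only [hT, hφ, Finset.mem_sigma, Finset.mem_powersetCard, Finset.mem_piAntidiag]
      refine ⟨⟨Finset.filter_subset _ _, hkq⟩, ?_, ?_⟩
      · have h2 : ∀ i ∈ univ.filter (fun i => k i ≠ 0), 2 ≤ k i := by
          intro i hi
          rw [Finset.mem_filter] at hi
          have := (hmemB k hkB).2 i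
          omega
        have h1 : ∑ i ∈ univ.filter (fun i => k i ≠ 0), ((k i - 2) + 2)
            = ∑ i ∈ univ.filter (fun i => k i ≠ 0), k i :=
          Finset.sum_congr rfl fun i hi => by have := h2 i hi; omega
        rw [Finset.sum_add_distrib, Finset.sum_const, smul_eq_mul] at h1
        have h3 := hsupp k hkB
        omega
      · intro i hi
        rw [Finset.mem_filter]
        refine ⟨Finset.mem_univ i, ?_⟩
        omega
    have hinj : Set.InjOn φ Bq := by
      intro k hk k' hk' he
      have h1 : univ.filter (fun i => k i ≠ 0) = univ.filter (fun i => k' i ≠ 0) :=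
        congrArg Sigma.fst he
      have h2 : (fun i => k i - 2) = (fun i => k' i - 2) := by
        have := congrArg Sigma.snd he
        simpa using this
      have hkB : k ∈ B := (Finset.mem_filter.1 hk).1
      have hk'B : k' ∈ B := (Finset.mem_filter.1 hk').1
      funext i
      have hne := (hmemB k hkB).2 i
      have hne' := (hmemB k' hk'B).2 i
      have h2i : k i - 2 = k' i - 2 := congrFun h2 i
      by_cases hz : k i = 0
      · have : i ∉ univ.filter (fun i => k' i ≠ 0) := by
          rw [← h1, Finset.mem_filter]
          simp [hz]
        rw [Finset.mem_filter] at this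
        push_neg at this
        have := this (Finset.mem_univ i)
        omega
      · have : i ∈ univ.filter (fun i => k' i ≠ 0) := by
          rw [← h1, Finset.mem_filter]
          exact ⟨Finset.mem_univ i, hz⟩
        rw [Finset.mem_filter] at this
        have hz' := this.2
        omega
    have hvnonneg : ∀ y, 0 ≤ v y := by
      intro y
      rw [hv]
      positivity
    calc ∑ k ∈ Bq, ∏ i, σ i ^ k i
        ≤ ∑ k ∈ Bq, v (φ k) := Finset.sum_le_sum hperk
      _ = ∑ y ∈ Bq.image φ, v y := (Finset.sum_image (fun k hk k' hk' => hinj hk hk')).symm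
      _ ≤ ∑ y ∈ T, v y := by
          refine Finset.sum_le_sum_of_subset_of_nonneg ?_ (fun y _ _ => hvnonneg y)
          intro y hy
          obtain ⟨k, hk, rfl⟩ := Finset.mem_image.1 hy
          exact hmapsto k hk
      _ = ∑ s ∈ Finset.powersetCard q (univ : Finset (Fin n)),
            ((Finset.piAntidiag s (p - 2*q)).card : ℝ) * (σb ^ (p - 2*q) * ∏ i ∈ s, σ i ^ 2) := by
          rw [hT, Finset.sum_sigma]
          refine Finset.sum_congr rfl fun s _ => ?_
          simp only [hv]
          rw [Finset.sum_const, nsmul_eq_mul]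
      _ ≤ ∑ s ∈ Finset.powersetCard q (univ : Finset (Fin n)),
            ((Nat.multichoose q (p - 2*q) : ℝ)) * (σb ^ (p - 2*q) * ∏ i ∈ s, σ i ^ 2) := by
          refine Finset.sum_le_sum fun s hs => ?_
          have hcard : s.card = q := (Finset.mem_powersetCard.1 hs).2
          have h := aux_card_piAntidiag s (p - 2*q)
          rw [hcard] at h
          have hnn : (0:ℝ) ≤ σb ^ (p - 2*q) * ∏ i ∈ s, σ i ^ 2 := by positivity
          exact mul_le_mul_of_nonneg_right (by exact_mod_cast h) hnn
      _ = (Nat.multichoose q (p - 2*q) : ℝ) * σb ^ (p - 2*q)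
            * ∑ s ∈ Finset.powersetCard q (univ : Finset (Fin n)), ∏ i ∈ s, σ i ^ 2 := by
          rw [Finset.mul_sum]
          exact Finset.sum_congr rfl fun s _ => by ring
      _ ≤ (Nat.multichoose q (p - 2*q) : ℝ) * σb ^ (p - 2*q) * (σb^2) ^ q := by
          have h1 := aux_esymm_le (univ : Finset (Fin n)) (fun i => σ i ^ 2)
            (fun i => sq_nonneg _) q
          have h2 : ((∑ i, σ i ^ 2)) ^ q ≤ (σb^2) ^ q :=
            pow_le_pow_left₀ (Finset.sum_nonneg fun i _ => sq_nonneg _) hσsum q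
          have h3 : (0:ℝ) ≤ (Nat.multichoose q (p - 2*q) : ℝ) * σb ^ (p - 2*q) := by positivity
          exact mul_le_mul_of_nonneg_left (le_trans h1 h2) h3
      _ = (Nat.multichoose q (p - 2*q) : ℝ) * σb ^ p := by
          rw [mul_assoc, ← pow_mul, ← pow_add]
          congr 2
          omega
      _ ≤ ((p-1).choose (q-1) : ℝ) * σb ^ p := by
          have key : Nat.multichoose q (p - 2*q) ≤ (p-1).choose (q-1) := by
            rw [Nat.multichoose_eq]
            have he : q + (p - 2*q) - 1 = p - q - 1 := by omega
            rw [he]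
            have he2 : p - 2*q = (p - q - 1) - (q - 1) := by omega
            rw [he2, Nat.choose_symm (by omega)]
            exact Nat.choose_le_choose _ (by omega)
          exact mul_le_mul_of_nonneg_right (by exact_mod_cast key) (by positivity)
  calc ∑ q ∈ range (p+1), ∑ k ∈ B.filter
          (fun k => (univ.filter (fun i => k i ≠ 0)).card = q), ∏ i, σ i ^ k i
      ≤ ∑ q ∈ range (p+1), ((p-1).choose (q-1) : ℝ) * σb ^ p := Finset.sum_le_sum hq
    _ = (∑ q ∈ range (p+1), ((p-1).choose (q-1) : ℕ) : ℝ) * σb ^ p := by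
        rw [← Finset.sum_mul]
    _ ≤ 2 ^ p * σb ^ p := by
        have hnat : ∑ q ∈ range (p+1), (p-1).choose (q-1) ≤ 2 ^ p := by
          obtain ⟨p', rfl⟩ : ∃ p', p = p' + 1 := ⟨p - 1, by omega⟩
          rw [Finset.sum_range_succ']
          have h1 : ∑ i ∈ range (p'+1), (p'+1-1).choose (i+1-1)
              = ∑ i ∈ range (p'+1), p'.choose i :=
            Finset.sum_congr rfl fun i _ => by congr 1 <;> omega
          rw [h1, Nat.sum_range_choose]
          have h2 : (p'+1-1).choose (0-1) = 1 := by simp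
          rw [h2]
          have h3 : 1 ≤ 2^p' := Nat.one_le_two_pow
          have h4 : 2^p' + 2^p' = 2^(p'+1) := by ring
          omega
        have : ((∑ q ∈ range (p+1), (p-1).choose (q-1) : ℕ) : ℝ) ≤ (2^p : ℕ) := by
          exact_mod_cast hnat
        refine mul_le_mul_of_nonneg_right ?_ (by positivity)
        push_cast at this ⊢
        linarith
/-- Lemma `lem:pwiseconcentration`, moment bound: if `X₁, …, Xₙ` are
`σᵢ`-subexponential real random variables (`E[|Xᵢ − E Xᵢ|^k] ≤ σᵢ^k k^k` for all `k ≥ 1`)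
that are `p`-wise independent, and `σ² = ∑ᵢ σᵢ²`, `X = ∑ᵢ Xᵢ`, then
`E[(X − E X)^p] ≤ (3σ)^p (2p)^p`. -/
theorem pwise_independent_moment_bound
    {Ω : Type*} [MeasurableSpace Ω] (μ : Measure Ω) [IsProbabilityMeasure μ]
    (n p : ℕ) (hp : 1 ≤ p) (X : Fin n → Ω → ℝ) (σ : Fin n → ℝ)
    (hσ : ∀ i, 0 ≤ σ i)
    (hmeas : ∀ i, Measurable (X i))
    (hint : ∀ (i : Fin n) (k : ℕ), 1 ≤ k →
      Integrable (fun ω => |X i ω - ∫ x, X i x ∂μ| ^ k) μ)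
    (hsub : ∀ (i : Fin n) (k : ℕ), 1 ≤ k →
      (∫ ω, |X i ω - ∫ x, X i x ∂μ| ^ k ∂μ) ≤ σ i ^ k * (k : ℝ) ^ k)
    (hindep : ∀ s : Finset (Fin n), s.card ≤ p →
      iIndepFun (m := fun _ : s => (inferInstance : MeasurableSpace ℝ))
        (fun i : s => X i.1) μ) :
    (∫ ω, ((∑ i, X i ω) - ∫ x, ∑ i, X i x ∂μ) ^ p ∂μ) ≤
      (3 * Real.sqrt (∑ i, σ i ^ 2)) ^ p * (2 * (p : ℝ)) ^ p := by
  classical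
  set σb : ℝ := Real.sqrt (∑ i, σ i ^ 2) with hσb
  have hσb0 : 0 ≤ σb := Real.sqrt_nonneg _
  have hσbsq : (∑ i, σ i ^ 2) ≤ σb ^ 2 :=
    (Real.sq_sqrt (Finset.sum_nonneg fun i _ => sq_nonneg _)).ge
  have hσle : ∀ i, σ i ≤ σb := by
    intro i
    have h1 : σ i ^ 2 ≤ ∑ j, σ j ^ 2 :=
      Finset.single_le_sum (fun j _ => sq_nonneg (σ j)) (Finset.mem_univ i)
    calc σ i = Real.sqrt (σ i ^ 2) := (Real.sqrt_sq (hσ i)).symm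
      _ ≤ σb := Real.sqrt_le_sqrt h1
  set m : Fin n → ℝ := fun i => ∫ x, X i x ∂μ with hm
  set Y : Fin n → Ω → ℝ := fun i ω => X i ω - m i with hY
  have hYmeas : ∀ i, Measurable (Y i) := fun i => (hmeas i).sub measurable_const
  have hYpow : ∀ (i : Fin n) (k : ℕ), Integrable (fun ω => Y i ω ^ k) μ := by
    intro i k
    rcases Nat.eq_zero_or_pos k with rfl | hk
    · simpa using integrable_const (1:ℝ)
    refine (hint i k hk).mono' (((hYmeas i).pow_const k).aestronglyMeasurable) ?_
    filter_upwards with ω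
    rw [Real.norm_eq_abs, abs_pow]
  have hXint : ∀ i, Integrable (X i) μ := by
    intro i
    have h2 : Integrable (Y i) μ := by
      have := hYpow i 1
      simpa using this
    have : X i = fun ω => Y i ω + m i := by funext ω; rw [hY]; ring_nf
    rw [this]
    exact h2.add (integrable_const (m i))
  have hEY : ∀ i, ∫ ω, Y i ω ∂μ = 0 := by
    intro i
    rw [hY]
    rw [integral_sub (hXint i) (integrable_const (m i)), integral_const]
    simp [hm]
  -- moments of |Y|
  have hYmom : ∀ (i : Fin n) (k : ℕ), 1 ≤ k →
      |∫ ω, Y i ω ^ k ∂μ| ≤ σ i ^ k * (k:ℝ) ^ k := by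
    intro i k hk
    calc |∫ ω, Y i ω ^ k ∂μ| ≤ ∫ ω, |Y i ω ^ k| ∂μ := by
          simpa [Real.norm_eq_abs] using norm_integral_le_integral_norm (fun ω => Y i ω ^ k) (μ := μ)
      _ = ∫ ω, |Y i ω| ^ k ∂μ := by simp_rw [abs_pow]
      _ ≤ σ i ^ k * (k:ℝ) ^ k := hsub i k hk
  -- the key independence identity
  set A := Finset.piAntidiag (univ : Finset (Fin n)) p with hA
  have hkey : ∀ k ∈ A, Integrable (fun ω => ∏ i, Y i ω ^ k i) μ ∧
      (∫ ω, ∏ i, Y i ω ^ k i ∂μ)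
        = ∏ i ∈ univ.filter (fun i => k i ≠ 0), ∫ ω, Y i ω ^ k i ∂μ := by
    intro k hk
    rw [hA, Finset.mem_piAntidiag] at hk
    set sk := univ.filter (fun i => k i ≠ 0) with hsk
    have hcard : sk.card ≤ p := by
      have h1 : sk.card = ∑ i ∈ sk, 1 := by rw [Finset.sum_const, smul_eq_mul, mul_one]
      have h2 : ∑ i ∈ sk, 1 ≤ ∑ i ∈ sk, k i := by
        refine Finset.sum_le_sum fun i hi => ?_
        rw [hsk, Finset.mem_filter] at hi
        omega
      have h3 : ∑ i ∈ sk, k i = p := by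
        rw [hsk, Finset.sum_filter_ne_zero]
        exact hk.1
      omega
    have hbase := hindep sk hcard
    have hcomp : iIndepFun (m := fun _ : sk => (inferInstance : MeasurableSpace ℝ))
        (fun i : sk => fun ω => Y i.1 ω ^ k i.1) μ := by
      have := hbase.comp (fun (i : sk) (x : ℝ) => (x - m i.1) ^ (k i.1))
        (fun i => (measurable_id.sub_const _).pow_const _)
      exact this
    have haux := aux_indep_prod (fun i : sk => fun ω => Y i.1 ω ^ k i.1)
      (fun i => (hYmeas i.1).pow_const _) (fun i => hYpow i.1 (k i.1)) hcomp Finset.univ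
    have hfun : (fun ω => ∏ i, Y i ω ^ k i)
        = fun ω => ∏ i : sk, Y i.1 ω ^ k i.1 := by
      funext ω
      rw [Finset.univ_eq_attach, Finset.prod_attach sk (fun i => Y i ω ^ k i)]
      refine (Finset.prod_subset (Finset.filter_subset _ _) ?_).symm
      intro i _ hi
      have hk0 : k i = 0 := by
        by_contra h
        exact hi (Finset.mem_filter.2 ⟨Finset.mem_univ i, h⟩)
      rw [hk0, pow_zero]
    constructor
    · rw [hfun]; exact haux.1
    · rw [hfun]
      rw [haux.2]
      rw [← Finset.prod_attach sk (fun i => ∫ ω, Y i ω ^ k i ∂μ), Finset.univ_eq_attach]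
  -- rewrite LHS in terms of Y
  have hsum_int : (∫ x, ∑ i, X i x ∂μ) = ∑ i, m i := by
    rw [integral_finset_sum univ (fun i _ => hXint i)]
  have hLrw : (∫ ω, ((∑ i, X i ω) - ∫ x, ∑ i, X i x ∂μ) ^ p ∂μ)
      = ∫ ω, (∑ i, Y i ω) ^ p ∂μ := by
    refine integral_congr_ae (Filter.Eventually.of_forall fun ω => ?_)
    show ((∑ i, X i ω) - ∫ x, ∑ i, X i x ∂μ) ^ p = (∑ i, Y i ω) ^ p
    rw [hsum_int, ← Finset.sum_sub_distrib]
  rw [hLrw]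
  have hexp : ∀ ω : Ω, (∑ i, Y i ω) ^ p
      = ∑ k ∈ A, (Nat.multinomial univ k : ℝ) * ∏ i, Y i ω ^ k i := fun ω =>
    Finset.sum_pow_eq_sum_piAntidiag univ (fun i => Y i ω) p
  have hswap : (∫ ω, (∑ i, Y i ω) ^ p ∂μ)
      = ∑ k ∈ A, (Nat.multinomial univ k : ℝ) * ∫ ω, ∏ i, Y i ω ^ k i ∂μ := by
    calc (∫ ω, (∑ i, Y i ω) ^ p ∂μ)
        = ∫ ω, ∑ k ∈ A, (Nat.multinomial univ k : ℝ) * ∏ i, Y i ω ^ k i ∂μ :=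
          integral_congr_ae (Filter.Eventually.of_forall fun ω => hexp ω)
      _ = ∑ k ∈ A, ∫ ω, (Nat.multinomial univ k : ℝ) * ∏ i, Y i ω ^ k i ∂μ :=
          integral_finset_sum A (fun k hk => ((hkey k hk).1.const_mul _))
      _ = ∑ k ∈ A, (Nat.multinomial univ k : ℝ) * ∫ ω, ∏ i, Y i ω ^ k i ∂μ :=
          Finset.sum_congr rfl fun k hk => integral_const_mul _ _
  rw [hswap]
  set B := A.filter (fun k => ∀ i, k i ≠ 1) with hBdef
  have hzero : ∀ k ∈ A, k ∉ B →
      (Nat.multinomial univ k : ℝ) * ∫ ω, ∏ i, Y i ω ^ k i ∂μ = 0 := by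
    intro k hkA hkB
    have hex : ¬ (∀ i, k i ≠ 1) := fun h => hkB (Finset.mem_filter.2 ⟨hkA, h⟩)
    push_neg at hex
    obtain ⟨i, hi1⟩ := hex
    have hisk : i ∈ univ.filter (fun j => k j ≠ 0) :=
      Finset.mem_filter.2 ⟨Finset.mem_univ i, by omega⟩
    rw [(hkey k hkA).2, Finset.prod_eq_zero hisk, mul_zero]
    rw [hi1]
    simp only [pow_one]
    exact hEY i
  rw [← Finset.sum_subset (Finset.filter_subset _ A) hzero]
  -- bound each term of the sum over B
  have hterm : ∀ k ∈ B, (Nat.multinomial univ k : ℝ) * ∫ ω, ∏ i, Y i ω ^ k i ∂μ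
      ≤ (p.factorial : ℝ) * Real.exp p * ∏ i, σ i ^ k i := by
    intro k hkB
    have hkA : k ∈ A := (Finset.mem_filter.1 hkB).1
    have hk1 : ∀ i, k i ≠ 1 := (Finset.mem_filter.1 hkB).2
    have hksum : ∑ i, k i = p := by
      have h := hkA
      rw [hA, Finset.mem_piAntidiag] at h
      exact h.1
    have h1 : (Nat.multinomial univ k : ℝ) * ∫ ω, ∏ i, Y i ω ^ k i ∂μ
        ≤ (Nat.multinomial univ k : ℝ)
            * ∏ i ∈ univ.filter (fun i => k i ≠ 0), (σ i ^ k i * (k i : ℝ) ^ k i) := by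
      rw [(hkey k hkA).2]
      refine mul_le_mul_of_nonneg_left ?_ (by positivity)
      calc ∏ i ∈ univ.filter (fun i => k i ≠ 0), ∫ ω, Y i ω ^ k i ∂μ
          ≤ |∏ i ∈ univ.filter (fun i => k i ≠ 0), ∫ ω, Y i ω ^ k i ∂μ| := le_abs_self _
        _ = ∏ i ∈ univ.filter (fun i => k i ≠ 0), |∫ ω, Y i ω ^ k i ∂μ| :=
            Finset.abs_prod _ _
        _ ≤ ∏ i ∈ univ.filter (fun i => k i ≠ 0), (σ i ^ k i * (k i : ℝ) ^ k i) := by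
            refine Finset.prod_le_prod (fun i _ => abs_nonneg _) fun i hi => ?_
            have hge : 1 ≤ k i := by
              rw [Finset.mem_filter] at hi
              omega
            exact hYmom i (k i) hge
    refine h1.trans ?_
    have h2 : ∏ i ∈ univ.filter (fun i => k i ≠ 0), (σ i ^ k i * (k i : ℝ) ^ k i)
        = ∏ i, (σ i ^ k i * (k i : ℝ) ^ k i) := by
      refine Finset.prod_subset (Finset.filter_subset _ _) ?_
      intro i _ hi
      have hk0 : k i = 0 := by
        by_contra h
        exact hi (Finset.mem_filter.2 ⟨Finset.mem_univ i, h⟩)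
      rw [hk0]
      norm_num
    rw [h2, Finset.prod_mul_distrib]
    have h3 : ∏ i, ((k i : ℝ)) ^ k i ≤ ∏ i, (((k i).factorial : ℝ) * Real.exp (k i)) :=
      Finset.prod_le_prod (fun i _ => by positivity) fun i _ => aux_pow_le (k i)
    have hspec : ((∏ i, (k i).factorial : ℕ) : ℝ) * (Nat.multinomial univ k : ℝ)
        = (p.factorial : ℝ) := by
      have h := Nat.multinomial_spec univ k
      rw [hksum] at h
      exact_mod_cast h
    have hexpsum : ∏ i, Real.exp (k i) = Real.exp p := by
      rw [← Real.exp_sum]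
      congr 1
      rw [← hksum]
      push_cast
      rfl
    calc (Nat.multinomial univ k : ℝ) * ((∏ i, σ i ^ k i) * ∏ i, ((k i : ℝ)) ^ k i)
        ≤ (Nat.multinomial univ k : ℝ)
            * ((∏ i, σ i ^ k i) * ∏ i, (((k i).factorial : ℝ) * Real.exp (k i))) := by
          refine mul_le_mul_of_nonneg_left
            (mul_le_mul_of_nonneg_left h3 (Finset.prod_nonneg fun i _ => pow_nonneg (hσ i) _))
            (by positivity)
      _ = (p.factorial : ℝ) * Real.exp p * ∏ i, σ i ^ k i := by
          rw [Finset.prod_mul_distrib, hexpsum]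
          have hcast : (∏ i, ((k i).factorial : ℝ)) = ((∏ i, (k i).factorial : ℕ) : ℝ) := by
            push_cast
            rfl
          rw [hcast, ← hspec]
          ring
  calc ∑ k ∈ B, (Nat.multinomial univ k : ℝ) * ∫ ω, ∏ i, Y i ω ^ k i ∂μ
      ≤ ∑ k ∈ B, (p.factorial : ℝ) * Real.exp p * ∏ i, σ i ^ k i := Finset.sum_le_sum hterm
    _ = (p.factorial : ℝ) * Real.exp p * ∑ k ∈ B, ∏ i, σ i ^ k i := by
        rw [Finset.mul_sum]
    _ ≤ (p.factorial : ℝ) * Real.exp p * (2 ^ p * σb ^ p) := by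
        refine mul_le_mul_of_nonneg_left ?_ (by positivity)
        exact aux_combin hp σ hσ σb hσb0 hσle hσbsq
    _ ≤ (3 * σb) ^ p * (2 * (p:ℝ)) ^ p := by
        have h1 : (p.factorial : ℝ) ≤ (p:ℝ)^p := by exact_mod_cast Nat.factorial_le_pow p
        have h2 : Real.exp p ≤ 3 ^ p := by
          have he : Real.exp (p:ℝ) = Real.exp 1 ^ p := by
            rw [← Real.exp_nat_mul]
            norm_num
          rw [he]
          refine pow_le_pow_left₀ (Real.exp_pos 1).le ?_ p
          exact le_of_lt (lt_trans Real.exp_one_lt_d9 (by norm_num))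
        calc (p.factorial : ℝ) * Real.exp p * (2 ^ p * σb ^ p)
            ≤ (p:ℝ)^p * 3^p * (2^p * σb^p) := by
              refine mul_le_mul ?_ le_rfl (by positivity) (by positivity)
              exact mul_le_mul h1 h2 (Real.exp_pos _).le (by positivity)
          _ = (3 * σb) ^ p * (2 * (p:ℝ)) ^ p := by
              rw [mul_pow, mul_pow]
              ring
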